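/- Let S(s) = ∑_{ℓ≥0} (−2)·((2ℓ+1)!!)⁵/((2ℓ+1)⁵·(10ℓ+3)!!) · s^{2ℓ+1} ∈ ℚ[[s]] and let θ = −(1/2)·s·d/ds. Then S satisfies s²(2θ−1)θ⁴S = 5(2θ+1)(5θ+1)(5θ+2)(5θ+3)(5θ+4)S. -/

import Mathlib

/-- The operator `θ = −(1/2)·s·d/ds` on formal power series over `ℚ`: `(θ f)ₙ = (−n/2)·fₙ`. -/
noncomputable def theta (f : PowerSeries ℚ) : PowerSeries ℚ :=
  PowerSeries.mk fun n => (-(n : ℚ) / 2) * PowerSeries.coeff n f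

/-- The Landau–Ginzburg disk potential
`S(s) = ∑_{ℓ ≥ 0} (−2)·((2ℓ+1)!!)⁵/((2ℓ+1)⁵·(10ℓ+3)!!) · s^{2ℓ+1}`
(for odd `n = 2ℓ+1` one has `(2ℓ+1)!! = n!!`, `(2ℓ+1)⁵ = n⁵` and `10ℓ+3 = 5n−2`). -/
noncomputable def S : PowerSeries ℚ :=
  PowerSeries.mk fun n =>
    if n % 2 = 1 then
      -2 * (Nat.doubleFactorial n : ℚ) ^ 5 /
        ((n : ℚ) ^ 5 * (Nat.doubleFactorial (5 * n - 2) : ℚ))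
    else 0

/-- The operator `5θ + a`. -/
noncomputable def A (a : ℚ) (f : PowerSeries ℚ) : PowerSeries ℚ :=
  (5 : ℚ) • theta f + a • f

open PowerSeries

lemma coeff_theta (f : PowerSeries ℚ) (n : ℕ) :
    coeff n (theta f) = (-(n : ℚ) / 2) * coeff n f := by simp [theta]

lemma coeff_A (a : ℚ) (f : PowerSeries ℚ) (n : ℕ) :
    coeff n (A a f) = (a - 5 * (n : ℚ) / 2) * coeff n f := by
  simp [A, coeff_theta]; ring

lemma df_expand (e : ℕ) : (e+10).doubleFactorial
    = (e+10)*((e+8)*((e+6)*((e+4)*((e+2)*e.doubleFactorial)))) := by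
  rw [show e+10 = (e+8)+2 by omega, Nat.doubleFactorial_add_two,
      show e+8 = (e+6)+2 by omega, Nat.doubleFactorial_add_two,
      show e+6 = (e+4)+2 by omega, Nat.doubleFactorial_add_two,
      show e+4 = (e+2)+2 by omega, Nat.doubleFactorial_add_two,
      Nat.doubleFactorial_add_two]


/-- `S` satisfies `s²(2θ−1)θ⁴S = 5(2θ+1)(5θ+1)(5θ+2)(5θ+3)(5θ+4)S`. -/
theorem S_satisfies_extended_picard_fuchs_LG :
    PowerSeries.X ^ 2 *
        ((2 : ℚ) • theta (theta (theta (theta (theta S)))) - theta (theta (theta (theta S)))) =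
      5 * ((2 : ℚ) • theta (A 1 (A 2 (A 3 (A 4 S)))) + A 1 (A 2 (A 3 (A 4 S)))) := by
  have h5 : (5 : PowerSeries ℚ) = PowerSeries.C (5 : ℚ) := (map_ofNat (C (R := ℚ)) 5).symm
  ext n
  rw [h5]
  simp only [map_mul, map_add, map_sub, map_smul, coeff_C_mul, coeff_X_pow_mul',
    coeff_theta, coeff_A, smul_eq_mul]
  rcases n with _ | _ | m
  · simp [S]
  · simp only [S, coeff_mk]; norm_num
  · rw [if_pos (by omega : 2 ≤ m + 2)]
    rw [show m + 1 + 1 - 2 = m by omega]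
    simp only [S, coeff_mk]
    rw [show (m+1+1) % 2 = m % 2 by omega]
    by_cases hpar : m % 2 = 1
    · simp only [hpar, reduceIte]
      have hm1 : 1 ≤ m := by omega
      have hE : ((5*m-2:ℕ):ℚ) = 5*(m:ℚ) - 2 := by
        have h : (5*m-2) + 2 = 5*m := by omega
        have h2 := congrArg (fun k : ℕ => (k:ℚ)) h
        push_cast at h2; linarith
      have hdf : ((Nat.doubleFactorial (5*(m+2)-2) : ℕ) : ℚ)
          = (5*(m:ℚ)+8)*((5*(m:ℚ)+6)*((5*(m:ℚ)+4)*((5*(m:ℚ)+2)*(5*(m:ℚ)))))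
            * ((Nat.doubleFactorial (5*m-2) : ℕ) : ℚ) := by
        rw [show 5*(m+2)-2 = (5*m-2)+10 by omega, df_expand]
        push_cast [show (5*m-2)+10 = 5*m+8 by omega, show (5*m-2)+8 = 5*m+6 by omega,
          show (5*m-2)+6 = 5*m+4 by omega, show (5*m-2)+4 = 5*m+2 by omega,
          show (5*m-2)+2 = 5*m by omega]
        ring
      have hdm2 : ((Nat.doubleFactorial (m+2) : ℕ) : ℚ)
          = ((m:ℚ)+2) * ((Nat.doubleFactorial m : ℕ) : ℚ) := by
        rw [Nat.doubleFactorial_add_two]; push_cast; ring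
      have hD : ((Nat.doubleFactorial (5*m-2) : ℕ) : ℚ) ≠ 0 := by
        exact_mod_cast (Nat.doubleFactorial_pos _).ne'
      have hm0 : (m:ℚ) ≠ 0 := by exact_mod_cast (by omega : m ≠ 0)
      have hm2 : (m:ℚ)+2 ≠ 0 := by positivity
      have h5m : (5*(m:ℚ)) ≠ 0 := by simp [hm0]
      have hp2 : 5*(m:ℚ)+2 ≠ 0 := by positivity
      have hp4 : 5*(m:ℚ)+4 ≠ 0 := by positivity
      have hp6 : 5*(m:ℚ)+6 ≠ 0 := by positivity
      have hp8 : 5*(m:ℚ)+8 ≠ 0 := by positivity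
      rw [hdf, hdm2]
      push_cast
      field_simp
      ring
    · simp [hpar]
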